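/- (Exactness of the Koszul complex of polynomial forms) The sequence 0 → P_rΛ^n(ℝ^n) →κ P_{r+1}Λ^{n−1}(ℝ^n) →κ ⋯ →κ P_{r+n}Λ^0(ℝ^n) → ℝ → 0 is exact, where the maps are the Koszul operator κ and the last map is evaluation at the origin; equivalently, for 0 < k < n, a polynomial k-form ω with κω = 0 satisfies ω = κη for some polynomial (k+1)-form η. -/

import Mathlib

open MvPolynomial

/-- Polynomial differential forms on `ℝ^n`: a family of polynomial coefficients indexed by
subsets `σ ⊆ {1,…,n}`; a `k`-form is supported on sets of cardinality `k`. -/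
abbrev PolyForm (n : ℕ) := Finset (Fin n) → MvPolynomial (Fin n) ℝ

/-- The sign `(-1)^{#{j ∈ σ : j < i}}`. -/
noncomputable def sgn {n : ℕ} (σ : Finset (Fin n)) (i : Fin n) : MvPolynomial (Fin n) ℝ :=
  (-1) ^ (σ.filter (fun j => j < i)).card

/-- The exterior derivative `d`. -/
noncomputable def extD (n : ℕ) : PolyForm n →ₗ[ℝ] PolyForm n where
  toFun ω := fun σ => ∑ i ∈ σ, sgn σ i * pderiv i (ω (σ.erase i))
  map_add' ω η := by
    funext σ
    simp [Pi.add_apply, mul_add, Finset.sum_add_distrib]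
  map_smul' c ω := by
    funext σ
    simp [Pi.smul_apply, Finset.smul_sum, mul_smul_comm]

/-- The Koszul operator `κ` (contraction with the position vector field). -/
noncomputable def koszul (n : ℕ) : PolyForm n →ₗ[ℝ] PolyForm n where
  toFun ω := fun σ => ∑ i ∈ σᶜ, sgn σ i * X i * ω (insert i σ)
  map_add' ω η := by
    funext σ
    simp [Pi.add_apply, mul_add, Finset.sum_add_distrib]
  map_smul' c ω := by
    funext σ
    simp [Pi.smul_apply, Finset.smul_sum, mul_smul_comm]

/-- The space of (polynomial) differential `k`-forms: families supported on index sets of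
cardinality `k`. -/
noncomputable def Lambda (n k : ℕ) : Submodule ℝ (PolyForm n) where
  carrier := {ω | ∀ σ, σ.card ≠ k → ω σ = 0}
  zero_mem' := fun σ _ => rfl
  add_mem' := fun ha hb σ h => by simp only [Pi.add_apply, ha σ h, hb σ h, add_zero]
  smul_mem' := fun c ω h σ hσ => by simp only [Pi.smul_apply, h σ hσ, smul_zero]

/-- The form monomial `x^α dx_σ`. -/
noncomputable def formMonomial {n : ℕ} (α : Fin n →₀ ℕ) (σ : Finset (Fin n)) : PolyForm n :=
  fun τ => if τ = σ then monomial α 1 else 0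

/-- The (total) degree `|α|` of a multi-index. -/
def mdeg {n : ℕ} (α : Fin n →₀ ℕ) : ℕ := α.sum fun _ m => m

/-- The linear degree of the form monomial `x^α dx_σ`: the number of `i ∉ σ` with `α i = 1`. -/
def ldeg {n : ℕ} (α : Fin n →₀ ℕ) (σ : Finset (Fin n)) : ℕ :=
  ((σᶜ).filter fun i => α i = 1).card

/-- `H_rΛ^k(ℝ^n)`: `k`-forms with homogeneous degree-`r` polynomial coefficients. -/
noncomputable def Hspace (n r k : ℕ) : Submodule ℝ (PolyForm n) :=
  Submodule.span ℝ {ω | ∃ α σ, σ.card = k ∧ mdeg α = r ∧ ω = formMonomial α σ}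

/-- `P_rΛ^k(ℝ^n)`: `k`-forms with polynomial coefficients of degree at most `r`. -/
noncomputable def Pspace (n r k : ℕ) : Submodule ℝ (PolyForm n) :=
  Submodule.span ℝ {ω | ∃ α σ, σ.card = k ∧ mdeg α ≤ r ∧ ω = formMonomial α σ}

/-- `H_{r,l}Λ^k(ℝ^n)`: homogeneous degree-`r` `k`-forms of linear degree at least `l`. -/
noncomputable def Hl (n r l k : ℕ) : Submodule ℝ (PolyForm n) :=
  Submodule.span ℝ
    {ω | ∃ α σ, σ.card = k ∧ mdeg α = r ∧ l ≤ ldeg α σ ∧ ω = formMonomial α σ}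

/-- `J_rΛ^k(ℝ^n) := Σ_{l ≥ 1} κ H_{r+l-1, l}Λ^{k+1}(ℝ^n)` (here `l` is reindexed as `l+1`). -/
noncomputable def Jspace (n r k : ℕ) : Submodule ℝ (PolyForm n) :=
  ⨆ l : ℕ, Submodule.map (koszul n) (Hl n (r + l) (l + 1) (k + 1))

/-- The trimmed polynomial space `P_r^-Λ^k := P_{r-1}Λ^k ⊕ κ H_{r-1}Λ^{k+1}`. -/
noncomputable def PminusSpace (n r k : ℕ) : Submodule ℝ (PolyForm n) :=
  Pspace n (r - 1) k ⊔ Submodule.map (koszul n) (Hspace n (r - 1) (k + 1))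

/-- The serendipity space `S_rΛ^k := P_rΛ^k + J_rΛ^k + d J_{r+1}Λ^{k-1}`
(the last summand being absent for `k = 0`). -/
noncomputable def Sspace (n r k : ℕ) : Submodule ℝ (PolyForm n) :=
  Pspace n r k ⊔ Jspace n r k ⊔
    (if k = 0 then ⊥ else Submodule.map (extD n) (Jspace n (r + 1) (k - 1)))

/-- The trimmed serendipity space `S_r^-Λ^k := S_{r-1}Λ^k + κ S_{r-1}Λ^{k+1}`. -/
noncomputable def SminusSpace (n r k : ℕ) : Submodule ℝ (PolyForm n) :=
  Sspace n (r - 1) k ⊔ Submodule.map (koszul n) (Sspace n (r - 1) (k + 1))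

section KoszulExactAux

open Finset MvPolynomial

variable {n : ℕ}

lemma koszul_apply' (ω : PolyForm n) (σ : Finset (Fin n)) :
    koszul n ω σ = ∑ i ∈ σᶜ, sgn σ i * X i * ω (insert i σ) := rfl

lemma extD_apply' (ω : PolyForm n) (σ : Finset (Fin n)) :
    extD n ω σ = ∑ i ∈ σ, sgn σ i * pderiv i (ω (σ.erase i)) := rfl

lemma sgn_mul_self (σ : Finset (Fin n)) (i : Fin n) : sgn σ i * sgn σ i = 1 := by
  simp [sgn, ← pow_add, ← two_mul, pow_mul]

lemma sgn_eq_C (σ : Finset (Fin n)) (i : Fin n) :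
    sgn σ i = C ((-1 : ℝ) ^ (σ.filter (fun j => j < i)).card) := by
  simp [sgn]

lemma pderiv_sgn_mul (σ : Finset (Fin n)) (j i : Fin n) (p : MvPolynomial (Fin n) ℝ) :
    pderiv i (sgn σ j * p) = sgn σ j * pderiv i p := by
  rw [sgn_eq_C, pderiv_C_mul]

lemma sgn_insert_self (σ : Finset (Fin n)) (i : Fin n) : sgn (insert i σ) i = sgn σ i := by
  unfold sgn
  rw [Finset.filter_insert, if_neg (lt_irrefl i)]

lemma sgn_erase_self (σ : Finset (Fin n)) (i : Fin n) : sgn (σ.erase i) i = sgn σ i := by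
  unfold sgn
  rw [Finset.filter_erase, Finset.erase_eq_of_notMem (by simp)]

lemma sgn_insert_ne {σ : Finset (Fin n)} {i j : Fin n} (hi : i ∉ σ) (hij : i ≠ j) :
    sgn (insert i σ) j = (if i < j then -1 else 1) * sgn σ j := by
  unfold sgn
  rw [Finset.filter_insert]
  by_cases h : i < j
  · rw [if_pos h, if_pos h,
      Finset.card_insert_of_notMem (fun hmem => hi (Finset.mem_of_mem_filter i hmem)), pow_succ]
    ring
  · rw [if_neg h, if_neg h, one_mul]

lemma sgn_erase_ne {σ : Finset (Fin n)} {i j : Fin n} (hj : j ∈ σ) (hij : j ≠ i) :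
    sgn (σ.erase j) i = (if j < i then -1 else 1) * sgn σ i := by
  conv_rhs => rw [← Finset.insert_erase hj]
  rw [sgn_insert_ne (Finset.notMem_erase j σ) hij]
  by_cases h : j < i
  · simp [h]
  · simp [h]

lemma sgn_cross {σ : Finset (Fin n)} {i j : Fin n} (hi : i ∉ σ) (hj : j ∈ σ) :
    sgn σ i * sgn (insert i σ) j + sgn σ j * sgn (σ.erase j) i = 0 := by
  have hij : i ≠ j := fun h => hi (h ▸ hj)
  rw [sgn_insert_ne hi hij, sgn_erase_ne hj hij.symm]
  rcases hij.lt_or_gt with h | h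
  · rw [if_pos h, if_neg (asymm h)]; ring
  · rw [if_neg (asymm h), if_pos h]; ring

lemma cartan (n : ℕ) (ω : PolyForm n) (σ : Finset (Fin n)) :
    koszul n (extD n ω) σ + extD n (koszul n ω) σ
      = (∑ i : Fin n, X i * pderiv i (ω σ)) + σ.card • ω σ := by
  have hA : koszul n (extD n ω) σ
      = (∑ i ∈ σᶜ, X i * pderiv i (ω σ))
        + ∑ i ∈ σᶜ, ∑ j ∈ σ, (sgn σ i * sgn (insert i σ) j)
            * (X i * pderiv j (ω (insert i (σ.erase j)))) := by
    rw [koszul_apply', ← Finset.sum_add_distrib]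
    refine Finset.sum_congr rfl fun i hi => ?_
    rw [Finset.mem_compl] at hi
    rw [extD_apply', Finset.sum_insert hi, Finset.erase_insert hi, sgn_insert_self,
      mul_add, Finset.mul_sum]
    congr 1
    · calc sgn σ i * X i * (sgn σ i * pderiv i (ω σ))
          = (sgn σ i * sgn σ i) * (X i * pderiv i (ω σ)) := by ring
        _ = X i * pderiv i (ω σ) := by rw [sgn_mul_self, one_mul]
    · refine Finset.sum_congr rfl fun j hj => ?_
      have hij : i ≠ j := fun h => hi (h ▸ hj)
      rw [Finset.erase_insert_of_ne hij]
      ring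
  have hB : extD n (koszul n ω) σ
      = ((∑ i ∈ σ, X i * pderiv i (ω σ)) + σ.card • ω σ)
        + ∑ i ∈ σ, ∑ j ∈ σᶜ, (sgn σ i * sgn (σ.erase i) j)
            * (X j * pderiv i (ω (insert j (σ.erase i)))) := by
    rw [extD_apply']
    have key : ∀ i ∈ σ, sgn σ i * pderiv i (koszul n ω (σ.erase i))
        = (X i * pderiv i (ω σ) + ω σ)
          + ∑ j ∈ σᶜ, (sgn σ i * sgn (σ.erase i) j)
              * (X j * pderiv i (ω (insert j (σ.erase i)))) := by
      intro i hi
      rw [koszul_apply', Finset.compl_erase, Finset.sum_insert (by simp [hi]),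
        sgn_erase_self, Finset.insert_erase hi, map_add, map_sum, mul_add, Finset.mul_sum]
      congr 1
      · rw [mul_assoc (sgn σ i) (X i) (ω σ), pderiv_sgn_mul, pderiv_mul, pderiv_X_self]
        calc sgn σ i * (sgn σ i * (1 * ω σ + X i * pderiv i (ω σ)))
            = (sgn σ i * sgn σ i) * (X i * pderiv i (ω σ) + ω σ) := by ring
          _ = X i * pderiv i (ω σ) + ω σ := by rw [sgn_mul_self, one_mul]
      · refine Finset.sum_congr rfl fun j hj => ?_
        rw [Finset.mem_compl] at hj
        have hji : j ≠ i := fun h => hj (h ▸ hi)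
        rw [mul_assoc (sgn (σ.erase i) j) (X j) _, pderiv_sgn_mul, pderiv_mul,
          pderiv_X_of_ne hji]
        ring
    rw [Finset.sum_congr rfl key, Finset.sum_add_distrib, Finset.sum_add_distrib,
      Finset.sum_const]
  rw [hA, hB]
  have hsum : (∑ i ∈ σ, X i * pderiv i (ω σ)) + (∑ i ∈ σᶜ, X i * pderiv i (ω σ))
      = ∑ i : Fin n, X i * pderiv i (ω σ) := Finset.sum_add_sum_compl σ _
  have hcancel : (∑ i ∈ σᶜ, ∑ j ∈ σ, (sgn σ i * sgn (insert i σ) j)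
          * (X i * pderiv j (ω (insert i (σ.erase j)))))
      + ∑ i ∈ σ, ∑ j ∈ σᶜ, (sgn σ i * sgn (σ.erase i) j)
          * (X j * pderiv i (ω (insert j (σ.erase i)))) = 0 := by
    rw [Finset.sum_comm (s := σ) (t := σᶜ), ← Finset.sum_add_distrib]
    refine Finset.sum_eq_zero fun i hi => ?_
    rw [← Finset.sum_add_distrib]
    refine Finset.sum_eq_zero fun j hj => ?_
    rw [Finset.mem_compl] at hi
    have : (sgn σ i * sgn (insert i σ) j) * (X i * pderiv j (ω (insert i (σ.erase j))))
        + (sgn σ j * sgn (σ.erase j) i) * (X i * pderiv j (ω (insert i (σ.erase j))))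
        = (sgn σ i * sgn (insert i σ) j + sgn σ j * sgn (σ.erase j) i)
            * (X i * pderiv j (ω (insert i (σ.erase j)))) := by ring
    rw [this, sgn_cross hi hj, zero_mul]
  linear_combination hsum + hcancel

lemma degree_sub_single_add {d : Fin n →₀ ℕ} {i : Fin n} (hi : d i ≠ 0) :
    (d - Finsupp.single i 1).degree + 1 = d.degree := by
  have hd : d - Finsupp.single i 1 + Finsupp.single i 1 = d := by
    ext j
    rcases eq_or_ne j i with rfl | hj
    · simp only [Finsupp.add_apply, Finsupp.tsub_apply, Finsupp.single_eq_same]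
      omega
    · simp [Finsupp.tsub_apply, Finsupp.single_eq_of_ne' (Ne.symm hj)]
  have hadd : ∀ a b : Fin n →₀ ℕ, (a + b).degree = a.degree + b.degree := fun a b => by
    simp [Finsupp.degree_eq_weight_one, map_add]
  have hsingle : (Finsupp.single i (1 : ℕ)).degree = 1 := by
    exact Finsupp.degree_single i 1
  conv_rhs => rw [← hd]
  rw [hadd, hsingle]

lemma hc_X_mul (r : ℕ) (i : Fin n) (p : MvPolynomial (Fin n) ℝ) :
    homogeneousComponent (r + 1) (X i * p) = X i * homogeneousComponent r p := by
  apply MvPolynomial.ext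
  intro d
  classical
  rw [coeff_homogeneousComponent, coeff_X_mul', coeff_X_mul', coeff_homogeneousComponent]
  by_cases hi : i ∈ d.support
  · simp only [if_pos hi]
    have hdeg := degree_sub_single_add (Finsupp.mem_support_iff.mp hi)
    by_cases h : Finsupp.degree d = r + 1
    · rw [if_pos h, if_pos (by omega)]
    · rw [if_neg h, if_neg (by omega)]
  · simp only [if_neg hi, ite_self]

lemma X_mul_pderiv_monomial (i : Fin n) (α : Fin n →₀ ℕ) (c : ℝ) :
    X i * pderiv i (monomial α c) = (α i) • monomial α c := by
  rw [pderiv_monomial]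
  rcases Nat.eq_zero_or_pos (α i) with h | h
  · simp [h]
  · have hd : Finsupp.single i 1 + (α - Finsupp.single i 1) = α := by
      ext j
      rcases eq_or_ne j i with rfl | hj
      · simp only [Finsupp.add_apply, Finsupp.tsub_apply, Finsupp.single_eq_same]
        omega
      · simp [Finsupp.tsub_apply, Finsupp.single_eq_of_ne' (Ne.symm hj)]
    rw [X, monomial_mul, hd, ← map_nsmul (monomial α)]
    congr 1
    push_cast [smul_eq_mul]
    ring

lemma euler_hc (r : ℕ) (p : MvPolynomial (Fin n) ℝ) :
    ∑ i : Fin n, X i * pderiv i (homogeneousComponent r p) = r • homogeneousComponent r p := by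
  rw [homogeneousComponent_apply, Finset.smul_sum]
  calc ∑ i : Fin n, X i * pderiv i (∑ d ∈ p.support with d.degree = r, monomial d (coeff d p))
      = ∑ i : Fin n, ∑ d ∈ p.support with d.degree = r,
          X i * pderiv i (monomial d (coeff d p)) := by
        refine Finset.sum_congr rfl fun i _ => ?_
        rw [map_sum, Finset.mul_sum]
    _ = ∑ d ∈ p.support with d.degree = r, ∑ i : Fin n,
          X i * pderiv i (monomial d (coeff d p)) := Finset.sum_comm
    _ = ∑ d ∈ p.support with d.degree = r, r • monomial d (coeff d p) := by
        refine Finset.sum_congr rfl fun d hd => ?_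
        rw [Finset.sum_congr rfl fun i _ => X_mul_pderiv_monomial i d (coeff d p),
          ← Finset.sum_smul]
        congr 1
        have h1 : ∑ i : Fin n, d i = Finsupp.degree d :=
          (Finset.sum_subset (Finset.subset_univ _)
            (fun x _ hx => Finsupp.notMem_support_iff.mp hx)).symm
        rw [h1, (Finset.mem_filter.mp hd).2]

lemma koszul_hc (r : ℕ) (ω : PolyForm n) (σ : Finset (Fin n)) :
    koszul n (fun τ => homogeneousComponent r (ω τ)) σ
      = homogeneousComponent (r + 1) (koszul n ω σ) := by
  rw [koszul_apply', koszul_apply', map_sum]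
  refine Finset.sum_congr rfl fun i hi => ?_
  conv_rhs => rw [sgn_eq_C, mul_assoc, homogeneousComponent_C_mul, hc_X_mul]
  rw [sgn_eq_C, mul_assoc]

end KoszulExactAux

/-- exactness of the Koszul complex of polynomial forms: for `0 < k < n`,
a polynomial `k`-form `ω` with `κω = 0` satisfies `ω = κη` for some polynomial
`(k+1)`-form `η`. -/
theorem koszul_complex_exact (n k : ℕ) (hk : 0 < k) (hkn : k < n) (ω : PolyForm n)
    (hω : ω ∈ Lambda n k) (h : koszul n ω = 0) :
    ∃ η ∈ Lambda n (k + 1), koszul n η = ω := by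
  classical
  set N := (Finset.univ : Finset (Finset (Fin n))).sup (fun τ => (ω τ).totalDegree) with hNdef
  set ωr : ℕ → PolyForm n := fun r τ => homogeneousComponent r (ω τ) with hωrdef
  have hκωr : ∀ r, koszul n (ωr r) = 0 := by
    intro r
    funext σ
    have hhc := koszul_hc (n := n) r ω σ
    rw [h] at hhc
    simpa using hhc
  have hωrLam : ∀ r τ, τ.card ≠ k → ωr r τ = 0 := by
    intro r τ hτ
    have h0 : ω τ = 0 := hω τ hτ
    simp [hωrdef, h0]
  have hκdωr : ∀ r, koszul n (extD n (ωr r)) = ((r : ℝ) + (k : ℝ)) • ωr r := by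
    intro r
    funext σ
    have hc := cartan n (ωr r) σ
    rw [hκωr r, map_zero] at hc
    simp only [Pi.zero_apply, add_zero] at hc
    rw [Pi.smul_apply]
    by_cases hτ : σ.card = k
    · have heuler : ∑ i : Fin n, X i * pderiv i (ωr r σ) = r • (ωr r σ) := by
        simp only [hωrdef]
        exact euler_hc r (ω σ)
      rw [heuler, hτ] at hc
      rw [hc, ← Nat.cast_smul_eq_nsmul ℝ r (ωr r σ), ← Nat.cast_smul_eq_nsmul ℝ k (ωr r σ),
        ← add_smul]
    · have h0 : ωr r σ = 0 := hωrLam r σ hτ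
      rw [h0] at hc ⊢
      simpa using hc
  refine ⟨∑ r ∈ Finset.range (N + 1), ((r : ℝ) + (k : ℝ))⁻¹ • extD n (ωr r), ?_, ?_⟩
  · intro τ hτ
    have hext : ∀ r, extD n (ωr r) τ = 0 := by
      intro r
      rw [extD_apply']
      refine Finset.sum_eq_zero fun i hi => ?_
      have hcard : (τ.erase i).card ≠ k := by
        rw [Finset.card_erase_of_mem hi]
        have hpos : 0 < τ.card := Finset.card_pos.mpr ⟨i, hi⟩
        omega
      rw [hωrLam r _ hcard, map_zero, mul_zero]
    simp [Finset.sum_apply, Pi.smul_apply, hext]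
  · rw [map_sum]
    have hterm : ∀ r ∈ Finset.range (N + 1),
        koszul n (((r : ℝ) + (k : ℝ))⁻¹ • extD n (ωr r)) = ωr r := by
      intro r _
      have hne : ((r : ℝ) + (k : ℝ)) ≠ 0 := by
        have : (0 : ℝ) < (r : ℝ) + (k : ℝ) :=
          add_pos_of_nonneg_of_pos (Nat.cast_nonneg r) (by exact_mod_cast hk)
        exact this.ne'
      rw [map_smul, hκdωr r, smul_smul, inv_mul_cancel₀ hne, one_smul]
    rw [Finset.sum_congr rfl hterm]
    funext τ
    rw [Finset.sum_apply]
    have hle : (ω τ).totalDegree ≤ N := by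
      rw [hNdef]
      exact Finset.le_sup (f := fun τ => (ω τ).totalDegree) (Finset.mem_univ τ)
    have hsub : Finset.range ((ω τ).totalDegree + 1) ⊆ Finset.range (N + 1) :=
      Finset.range_subset_range.mpr (by omega)
    calc ∑ r ∈ Finset.range (N + 1), ωr r τ
        = ∑ r ∈ Finset.range ((ω τ).totalDegree + 1), homogeneousComponent r (ω τ) := by
          refine (Finset.sum_subset hsub fun r hr hr' => ?_).symm
          simp only [Finset.mem_range, not_lt] at hr hr'
          simp only [hωrdef]
          exact homogeneousComponent_eq_zero _ (ω τ) (by omega)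
      _ = ω τ := sum_homogeneousComponent _
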